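/- Let g be a finite-dimensional real Lie algebra equipped with an inner product ⟨·,·⟩; for u ∈ g let ad_u : g → g denote v ↦ ⁅u,v⁆ and ad*_u its adjoint with respect to ⟨·,·⟩. Let X ∈ g satisfy ad*_X = −ad_X, let Φ(t) := exp(t·ad_X), let V : ℝ → g be differentiable, and define U(t) := X + Φ(t)(V(t)). Then U is constant in t (U'(t) = 0 for all t) if and only if V'(t) = ad*_X V(t) for all t ∈ ℝ. -/

import Mathlib

open scoped RealInnerProductSpace

variable {g : Type*} [NormedAddCommGroup g] [InnerProductSpace ℝ g] [FiniteDimensional ℝ g]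

/-- The adjoint operator `ad_u : v ↦ ⁅u, v⁆` of a Lie bracket `br`, as a
continuous linear map on the finite-dimensional space `g`. -/
noncomputable def adOp (br : g →ₗ[ℝ] g →ₗ[ℝ] g) (u : g) : g →L[ℝ] g :=
  LinearMap.toContinuousLinearMap (br u)

/-- The coadjoint operator `ad*_u`, the adjoint of `ad_u` with respect to the
inner product. -/
noncomputable def adStarOp (br : g →ₗ[ℝ] g →ₗ[ℝ] g) (u : g) : g →L[ℝ] g :=
  ContinuousLinearMap.adjoint (adOp br u)

/-- The operator exponential `Φ(t) = exp(t ad_X)`. -/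
noncomputable def phiExp (br : g →ₗ[ℝ] g →ₗ[ℝ] g) (X : g) (t : ℝ) : g →L[ℝ] g :=
  NormedSpace.exp (t • adOp br X)

/-- The stationarity criterion in Theorem 5.1, in the
finite-dimensional real Lie algebra setting (the Lie algebra is a
finite-dimensional real inner product space `g` with an antisymmetric bilinear
bracket `br` satisfying the Jacobi identity). With `ad*_X = -ad_X` and
`U(t) = X + exp(t ad_X)(V(t))`, the curve `U` is constant in `t`
(`U'(t) = 0` for all `t`) if and only if `V'(t) = ad*_X V(t)` for all `t`. -/
theorem statement12 (br : g →ₗ[ℝ] g →ₗ[ℝ] g)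
    (hanti : ∀ x y : g, br x y = -br y x)
    (hjacobi : ∀ x y z : g, br (br x y) z + br (br y z) x + br (br z x) y = 0)
    (X : g) (hX : adStarOp br X = -adOp br X)
    (V : ℝ → g) (hV : Differentiable ℝ V) :
    (∀ t : ℝ, HasDerivAt (fun s : ℝ => X + phiExp br X s (V s)) 0 t)
      ↔ (∀ t : ℝ, HasDerivAt V (adStarOp br X (V t)) t) := by
  set A := adOp br X with hA
  have hphi : ∀ t : ℝ, HasDerivAt (fun s : ℝ => phiExp br X s)
      (phiExp br X t * A) t := fun t => hasDerivAt_exp_smul_const A t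
  have hXstar : ∀ v : g, adStarOp br X v = -(A v) := by
    intro v; rw [hX]; simp
  constructor
  · intro h t
    have hVt := (hV t).hasDerivAt
    have hU : HasDerivAt (fun s : ℝ => X + phiExp br X s (V s))
        (0 + ((phiExp br X t * A) (V t) + phiExp br X t (deriv V t))) t :=
      (hasDerivAt_const t X).add ((hphi t).clm_apply hVt)
    have h0 : (0 : g) + ((phiExp br X t * A) (V t) + phiExp br X t (deriv V t)) = 0 :=
      hU.unique (h t)
    have h1 : phiExp br X t (A (V t) + deriv V t) = 0 := by
      rw [map_add]
      simpa [ContinuousLinearMap.mul_apply] using h0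
    have key : phiExp br X (-t) * phiExp br X t = 1 := by
      rw [phiExp, phiExp, neg_smul,
        ← NormedSpace.exp_add_of_commute_of_mem_ball (𝕂 := ℝ) (Commute.refl (t • A)).neg_left
          ((NormedSpace.expSeries_radius_eq_top ℝ (g →L[ℝ] g)).symm ▸ edist_lt_top _ _)
          ((NormedSpace.expSeries_radius_eq_top ℝ (g →L[ℝ] g)).symm ▸ edist_lt_top _ _)]
      simp [NormedSpace.exp_zero]
    have hinj : A (V t) + deriv V t = 0 := by
      have h2 := congrArg (fun w => phiExp br X (-t) w) h1
      simp only [← ContinuousLinearMap.mul_apply, key, map_zero] at h2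
      simpa using h2
    have hderiv : deriv V t = adStarOp br X (V t) := by
      rw [hXstar]
      exact eq_neg_of_add_eq_zero_right hinj
    rw [← hderiv]; exact hVt
  · intro h t
    have hU : HasDerivAt (fun s : ℝ => X + phiExp br X s (V s))
        (0 + ((phiExp br X t * A) (V t) + phiExp br X t (adStarOp br X (V t)))) t :=
      (hasDerivAt_const t X).add ((hphi t).clm_apply (h t))
    have : (0 : g) + ((phiExp br X t * A) (V t) + phiExp br X t (adStarOp br X (V t))) = 0 := by
      rw [hXstar, ContinuousLinearMap.mul_apply]
      simp
    rwa [this] at hU
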